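/- Let a nil₂-group G be presented by generators {x_i : i ∈ I} and relations {r_j : j ∈ J}, let A be an abelian group, (a_i) an I-tuple in A, and Φ : G^ab ⊗ G^ab → A a homomorphism. Then the unique quadratic map f : ⟨x_i⟩^nil → A with f(x_i) = a_i and cross-effect (x_i|x_{i'})_f = Φ(x̂_i ⊗ x̂_{i'}) factors through the quotient G if and only if f(r_j) = 0 for all j ∈ J. -/

import Mathlib

open scoped TensorProduct

/-- The free nilpotent group of class two on a set `S`. -/
abbrev FreeNil2 (S : Type*) : Type _ :=
  FreeGroup S ⧸ (⊤ : Subgroup (FreeGroup S)).lowerCentralSeries 2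

/-- The nil₂-group presented by generators `I` and relations `r : J → FreeNil2 I`. -/
abbrev PresNil2 {I J : Type*} (r : J → FreeNil2 I) : Type _ :=
  FreeNil2 I ⧸ Subgroup.normalClosure (Set.range r)

/-- The class of `u ∈ ⟨I⟩ⁿⁱˡ` in the abelianization `G^ab` of the presented group `G`,
written additively. -/
def presAb {I J : Type*} (r : J → FreeNil2 I) (u : FreeNil2 I) :
    Additive (Abelianization (PresNil2 r)) :=
  Additive.ofMul (Abelianization.of (QuotientGroup.mk u))

/-- Let the nil₂-group `G` be presented by generators `I` and relations `r_j`; let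
`f : ⟨I⟩ⁿⁱˡ → A` be the unique quadratic map with `f(x_i) = a_i` and cross-effects
given by `Φ : G^ab ⊗ G^ab → A`.  Then `f` factors through `G` iff `f(r_j) = 0` for all `j`. -/
theorem presentedNil2_quadratic_factors (I J : Type*) (r : J → FreeNil2 I)
    {A : Type*} [AddCommGroup A] (a : I → A)
    (Φ : (Additive (Abelianization (PresNil2 r))) ⊗[ℤ]
          (Additive (Abelianization (PresNil2 r))) →ₗ[ℤ] A)
    (f : FreeNil2 I → A)
    (hgen : ∀ i : I, f (QuotientGroup.mk (FreeGroup.of i)) = a i)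
    (hquad : ∀ u v : FreeNil2 I,
      f (u * v) = f u + f v + Φ (presAb r u ⊗ₜ[ℤ] presAb r v)) :
    (∀ j : J, f (r j) = 0) ↔
      ∃ g : PresNil2 r → A, ∀ u : FreeNil2 I, g (QuotientGroup.mk u) = f u := by
  set N := Subgroup.normalClosure (Set.range r) with hN
  -- basic facts
  have hone : presAb r (1 : FreeNil2 I) = 0 := by
    simp [presAb]
  have hmul : ∀ u v : FreeNil2 I, presAb r (u * v) = presAb r u + presAb r v := by
    intro u v
    simp only [presAb, QuotientGroup.mk_mul, map_mul]
    rfl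
  have hker : ∀ n : FreeNil2 I, n ∈ N → presAb r n = 0 := by
    intro n hn
    have h1 : (QuotientGroup.mk n : PresNil2 r) = 1 := (QuotientGroup.eq_one_iff n).mpr hn
    simp [presAb, h1]
  have hf1 : f (1 : FreeNil2 I) = 0 := by
    have h := hquad 1 1
    rw [mul_one, hone] at h
    simp only [TensorProduct.zero_tmul, map_zero, add_zero] at h
    have : f (1 : FreeNil2 I) + 0 = f 1 + f 1 := by rw [add_zero]; exact h
    exact (add_left_cancel this).symm
  -- for n ∈ N, f (u * n) = f u + f n
  have hmuln : ∀ (u n : FreeNil2 I), n ∈ N → f (u * n) = f u + f n := by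
    intro u n hn
    rw [hquad u n, hker n hn]
    simp
  have hnmul : ∀ (n u : FreeNil2 I), n ∈ N → f (n * u) = f n + f u := by
    intro n u hn
    rw [hquad n u, hker n hn]
    simp
  constructor
  · intro hrel
    -- the subgroup of elements of N where f vanishes
    have hKsub : ∃ K : Subgroup (FreeNil2 I), K.Normal ∧
        (∀ x, x ∈ K ↔ f x = 0 ∧ x ∈ N) := by
      refine ⟨{ carrier := {x | f x = 0 ∧ x ∈ N}
                mul_mem' := ?_
                one_mem' := ⟨hf1, N.one_mem⟩
                inv_mem' := ?_ }, ?_, fun x => Iff.rfl⟩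
      · rintro x y ⟨hfx, hx⟩ ⟨hfy, hy⟩
        exact ⟨by rw [hnmul x y hx, hfx, hfy, add_zero], N.mul_mem hx hy⟩
      · rintro x ⟨hfx, hx⟩
        refine ⟨?_, N.inv_mem hx⟩
        have h := hnmul x x⁻¹ hx
        rw [mul_inv_cancel, hf1, hfx, zero_add] at h
        exact h.symm
      · constructor
        rintro x ⟨hfx, hx⟩ g
        refine ⟨?_, (Subgroup.normalClosure_normal).conj_mem x hx g⟩
        have h1 : f (g * x) = f g := by
          rw [hmuln g x hx, hfx, add_zero]
        have h2 : presAb r (g * x) = presAb r g := by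
          rw [hmul g x, hker x hx, add_zero]
        have h3 : f (g * x * g⁻¹) = f g + f g⁻¹ + Φ (presAb r g ⊗ₜ[ℤ] presAb r g⁻¹) := by
          rw [hquad (g * x) g⁻¹, h1, h2]
        have h4 : f g + f g⁻¹ + Φ (presAb r g ⊗ₜ[ℤ] presAb r g⁻¹) = 0 := by
          rw [← hquad g g⁻¹, mul_inv_cancel, hf1]
        rw [h3, h4]
    obtain ⟨K, hKnorm, hKmem⟩ := hKsub
    haveI := hKnorm
    have hNK : N ≤ K := by
      apply Subgroup.normalClosure_le_normal
      rintro x ⟨j, rfl⟩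
      exact (hKmem _).mpr ⟨hrel j, Subgroup.subset_normalClosure (Set.mem_range_self j)⟩
    have hfN : ∀ n : FreeNil2 I, n ∈ N → f n = 0 := fun n hn => ((hKmem n).mp (hNK hn)).1
    refine ⟨fun x => Quotient.liftOn' x f ?_, ?_⟩
    · intro u v huv
      have h : u⁻¹ * v ∈ N := (QuotientGroup.leftRel_apply).mp huv
      have : f (u * (u⁻¹ * v)) = f u + f (u⁻¹ * v) := hmuln u _ h
      rw [mul_inv_cancel_left, hfN _ h, add_zero] at this
      exact this.symm
    · intro u
      rfl
  · rintro ⟨g, hg⟩ j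
    have h1 : (QuotientGroup.mk (r j) : PresNil2 r) = 1 :=
      (QuotientGroup.eq_one_iff _).mpr (Subgroup.subset_normalClosure (Set.mem_range_self j))
    calc f (r j) = g (QuotientGroup.mk (r j)) := (hg (r j)).symm
      _ = g (QuotientGroup.mk 1) := by rw [h1, QuotientGroup.mk_one]
      _ = f 1 := hg 1
      _ = 0 := hf1
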